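/- Let N ≥ 1 be an integer and let f: ℤ/Nℤ → ℝ be a real function. Then the triple average (1/N³) Σ_{x,y,z ∈ ℤ/Nℤ} e^{i(f(x)+f(z−x)−f(y)−f(z−y))} is a nonnegative real number and satisfies (1/N³) Σ_{x,y,z ∈ ℤ/Nℤ} e^{i(f(x)+f(z−x)−f(y)−f(z−y))} ≥ 1/‖e^{if}‖²_{A(𝕋_N)}, where e^{if} denotes the function j ↦ e^{if(j)}. -/

import Mathlib

open scoped Real
open Complex Filter

/-- The Fourier transform on the cyclic group `ℤ/Nℤ`. -/
noncomputable def dftN (N : ℕ) [NeZero N] (g : ZMod N → ℂ) (k : ZMod N) : ℂ :=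
  (1 / (N : ℂ)) * ∑ j : ZMod N,
    g j * Complex.exp (-(2 * (π : ℂ) * Complex.I) * (j.val : ℂ) * (k.val : ℂ) / (N : ℂ))

/-- The `A(𝕋_N)` norm on the cyclic group `ℤ/Nℤ`. -/
noncomputable def normAN (N : ℕ) [NeZero N] (g : ZMod N → ℂ) : ℝ :=
  ∑ k : ZMod N, ‖dftN N g k‖

open Finset

variable {N : ℕ} [NeZero N]

lemma expChar_eq (j k : ZMod N) :
    Complex.exp (-(2 * (π : ℂ) * Complex.I) * (j.val : ℂ) * (k.val : ℂ) / (N : ℂ)) =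
      ZMod.stdAddChar (-(j * k)) := by
  have h : (-(j * k) : ZMod N) = ((-((j.val : ℤ) * (k.val : ℤ)) : ℤ) : ZMod N) := by
    push_cast [ZMod.natCast_val, ZMod.intCast_zmod_cast]
    simp [ZMod.natCast_val]
  rw [h, ZMod.stdAddChar_coe]
  congr 1
  push_cast
  ring

lemma dftN_eq_char (g : ZMod N → ℂ) (k : ZMod N) :
    dftN N g k = (1 / (N : ℂ)) * ∑ j : ZMod N, g j * ZMod.stdAddChar (-(j * k)) := by
  unfold dftN
  congr 1
  exact Finset.sum_congr rfl fun j _ => by rw [expChar_eq]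

lemma conj_stdAddChar (a : ZMod N) :
    (starRingEnd ℂ) (ZMod.stdAddChar a) = ZMod.stdAddChar (-a) := by
  have h : (a : ZMod N) = (((a.val : ℤ)) : ZMod N) := by simp [ZMod.natCast_val]
  rw [h, ← Int.cast_neg, ZMod.stdAddChar_coe, ZMod.stdAddChar_coe, ← Complex.exp_conj]
  congr 1
  simp only [map_div₀, map_mul, map_neg, map_ofNat, Complex.conj_I, Complex.conj_ofReal,
    map_intCast (starRingEnd ℂ), Complex.conj_natCast]
  push_cast
  ring

lemma char_sum (t : ZMod N) :
    ∑ k : ZMod N, ZMod.stdAddChar (t * k) = if t = 0 then (N : ℂ) else 0 := by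
  split_ifs with h
  · simp [h]
  · exact AddChar.sum_eq_zero_of_ne_one (ZMod.isPrimitive_stdAddChar N h)

/-- Parseval, complex form. -/
lemma parsevalC (g : ZMod N → ℂ) :
    ∑ k : ZMod N, ((Complex.normSq (dftN N g k) : ℝ) : ℂ)
      = (1 / (N : ℂ)) * ∑ j : ZMod N, ((Complex.normSq (g j) : ℝ) : ℂ) := by
  have hNC : (N : ℂ) ≠ 0 := Nat.cast_ne_zero.mpr (NeZero.ne N)
  have key : ∀ k : ZMod N, ((Complex.normSq (dftN N g k) : ℝ) : ℂ)
      = (1 / (N : ℂ))^2 * ∑ j : ZMod N, ∑ j' : ZMod N,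
          (g j * (starRingEnd ℂ) (g j')) * ZMod.stdAddChar ((j' - j) * k) := by
    intro k
    rw [← Complex.mul_conj, dftN_eq_char, map_mul, map_sum]
    have hc : ∀ j' : ZMod N, (starRingEnd ℂ) (g j' * ZMod.stdAddChar (-(j' * k)))
        = (starRingEnd ℂ) (g j') * ZMod.stdAddChar (j' * k) := by
      intro j'
      rw [map_mul, conj_stdAddChar, neg_neg]
    rw [Finset.sum_congr rfl fun j' _ => hc j']
    rw [map_div₀, map_one, Complex.conj_natCast]
    rw [mul_mul_mul_comm, Finset.sum_mul_sum]
    rw [← pow_two]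
    congr 1
    refine Finset.sum_congr rfl fun j _ => Finset.sum_congr rfl fun j' _ => ?_
    have : ZMod.stdAddChar (-(j * k)) * ZMod.stdAddChar (j' * k)
        = ZMod.stdAddChar ((j' - j) * k) := by
      rw [← AddChar.map_add_eq_mul]
      congr 1
      ring
    rw [← this]
    ring
  rw [Finset.sum_congr rfl fun k _ => key k, ← Finset.mul_sum]
  rw [Finset.sum_comm]
  have inner : ∀ j : ZMod N, ∑ k : ZMod N, ∑ j' : ZMod N,
      (g j * (starRingEnd ℂ) (g j')) * ZMod.stdAddChar ((j' - j) * k)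
      = (N : ℂ) * ((Complex.normSq (g j) : ℝ) : ℂ) := by
    intro j
    rw [Finset.sum_comm]
    have h1 : ∀ j' : ZMod N, ∑ k : ZMod N,
        (g j * (starRingEnd ℂ) (g j')) * ZMod.stdAddChar ((j' - j) * k)
        = (g j * (starRingEnd ℂ) (g j')) * (if j' - j = 0 then (N : ℂ) else 0) := by
      intro j'
      rw [← Finset.mul_sum, char_sum]
    rw [Finset.sum_congr rfl fun j' _ => h1 j']
    have h2 : ∀ j' : ZMod N, (j' - j = 0) ↔ (j' = j) := fun j' => sub_eq_zero
    simp only [h2]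
    simp only [mul_ite, mul_zero, Finset.sum_ite_eq', Finset.mem_univ, if_true,
      Complex.mul_conj]
    ring
  rw [Finset.sum_congr rfl fun j _ => inner j, ← Finset.mul_sum]
  field_simp

/-- Parseval, real form. -/
lemma parsevalR (g : ZMod N → ℂ) :
    ∑ k : ZMod N, Complex.normSq (dftN N g k)
      = (1 / (N : ℝ)) * ∑ j : ZMod N, Complex.normSq (g j) := by
  have := parsevalC g
  have h2 : (((∑ k : ZMod N, Complex.normSq (dftN N g k)) : ℝ) : ℂ)
      = (((1 / (N : ℝ)) * ∑ j : ZMod N, Complex.normSq (g j) : ℝ) : ℂ) := by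
    push_cast
    rw [this]
  exact_mod_cast h2

/-- Convolution theorem. -/
lemma dftN_conv (g : ZMod N → ℂ) (k : ZMod N) :
    dftN N (fun z => ∑ x : ZMod N, g x * g (z - x)) k = (N : ℂ) * (dftN N g k) ^ 2 := by
  have hNC : (N : ℂ) ≠ 0 := Nat.cast_ne_zero.mpr (NeZero.ne N)
  rw [dftN_eq_char]
  have step : ∀ z : ZMod N, (∑ x : ZMod N, g x * g (z - x)) * ZMod.stdAddChar (-(z * k))
      = ∑ x : ZMod N, g x * g (z - x) * ZMod.stdAddChar (-(z * k)) := fun z =>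
    Finset.sum_mul _ _ _
  rw [Finset.sum_congr rfl fun z _ => step z, Finset.sum_comm]
  have inner : ∀ x : ZMod N, ∑ z : ZMod N, g x * g (z - x) * ZMod.stdAddChar (-(z * k))
      = (g x * ZMod.stdAddChar (-(x * k))) * ∑ w : ZMod N, g w * ZMod.stdAddChar (-(w * k)) := by
    intro x
    rw [Finset.mul_sum]
    refine Fintype.sum_equiv (Equiv.subRight x) _ _ fun z => ?_
    simp only [Equiv.subRight_apply]
    have key : ZMod.stdAddChar (-(x * k)) * ZMod.stdAddChar (-((z - x) * k))
        = ZMod.stdAddChar (-(z * k)) := by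
      rw [← AddChar.map_add_eq_mul]
      congr 1
      ring
    rw [← key]
    ring
  rw [Finset.sum_congr rfl fun x _ => inner x, ← Finset.sum_mul]
  rw [dftN_eq_char]
  field_simp

lemma triple_sum_eq (f : ZMod N → ℝ) :
    (∑ x : ZMod N, ∑ y : ZMod N, ∑ z : ZMod N,
        Complex.exp (Complex.I * ((f x + f (z - x) - f y - f (z - y) : ℝ) : ℂ)))
      = ∑ z : ZMod N, ((Complex.normSq
          (∑ x : ZMod N, Complex.exp (Complex.I * (f x : ℂ))
            * Complex.exp (Complex.I * (f (z - x) : ℂ))) : ℝ) : ℂ) := by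
  set g : ZMod N → ℂ := fun j => Complex.exp (Complex.I * (f j : ℂ)) with hg
  have hconj : ∀ r : ℝ, (starRingEnd ℂ) (Complex.exp (Complex.I * (r : ℂ)))
      = Complex.exp (-(Complex.I * (r : ℂ))) := by
    intro r
    rw [← Complex.exp_conj]
    congr 1
    simp [Complex.conj_ofReal]
  have hterm : ∀ x y z : ZMod N,
      Complex.exp (Complex.I * ((f x + f (z - x) - f y - f (z - y) : ℝ) : ℂ))
        = (g x * g (z - x)) * (starRingEnd ℂ) (g y * g (z - y)) := by
    intro x y z
    simp only [hg]
    rw [map_mul, hconj, hconj, ← Complex.exp_add, ← Complex.exp_add, ← Complex.exp_add]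
    congr 1
    push_cast
    ring
  simp only [hterm]
  calc (∑ x : ZMod N, ∑ y : ZMod N, ∑ z : ZMod N,
          (g x * g (z - x)) * (starRingEnd ℂ) (g y * g (z - y)))
      = ∑ x : ZMod N, ∑ z : ZMod N, ∑ y : ZMod N,
          (g x * g (z - x)) * (starRingEnd ℂ) (g y * g (z - y)) :=
        Finset.sum_congr rfl fun x _ => Finset.sum_comm
    _ = ∑ z : ZMod N, ∑ x : ZMod N, ∑ y : ZMod N,
          (g x * g (z - x)) * (starRingEnd ℂ) (g y * g (z - y)) := Finset.sum_comm
    _ = ∑ z : ZMod N, ((Complex.normSq (∑ x : ZMod N, g x * g (z - x)) : ℝ) : ℂ) := by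
        refine Finset.sum_congr rfl fun z _ => ?_
        rw [← Complex.mul_conj, map_sum, Finset.sum_mul_sum]


theorem triple_average_lower_bound
    (N : ℕ) [NeZero N] (f : ZMod N → ℝ) :
    (((1 : ℂ) / (N : ℂ) ^ 3) * ∑ x : ZMod N, ∑ y : ZMod N, ∑ z : ZMod N,
        Complex.exp (Complex.I * ((f x + f (z - x) - f y - f (z - y) : ℝ) : ℂ))).im = 0 ∧
    0 ≤ (((1 : ℂ) / (N : ℂ) ^ 3) * ∑ x : ZMod N, ∑ y : ZMod N, ∑ z : ZMod N,
        Complex.exp (Complex.I * ((f x + f (z - x) - f y - f (z - y) : ℝ) : ℂ))).re ∧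
    1 / (normAN N fun j : ZMod N => Complex.exp (Complex.I * (f j : ℂ))) ^ 2 ≤
      (((1 : ℂ) / (N : ℂ) ^ 3) * ∑ x : ZMod N, ∑ y : ZMod N, ∑ z : ZMod N,
        Complex.exp (Complex.I * ((f x + f (z - x) - f y - f (z - y) : ℝ) : ℂ))).re := by
  have hNR : (0 : ℝ) < (N : ℝ) := Nat.cast_pos.mpr (Nat.pos_of_ne_zero (NeZero.ne N))
  set g : ZMod N → ℂ := fun j => Complex.exp (Complex.I * (f j : ℂ)) with hgdef
  set h : ZMod N → ℂ := fun z => ∑ x : ZMod N, g x * g (z - x) with hhdef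
  set r : ℝ := (1 / (N : ℝ) ^ 3) * ∑ z : ZMod N, Complex.normSq (h z) with hrdef
  have hE : (((1 : ℂ) / (N : ℂ) ^ 3) * ∑ x : ZMod N, ∑ y : ZMod N, ∑ z : ZMod N,
      Complex.exp (Complex.I * ((f x + f (z - x) - f y - f (z - y) : ℝ) : ℂ))) = ((r : ℝ) : ℂ) := by
    rw [triple_sum_eq f, hrdef]
    push_cast
    ring
  rw [hE]
  refine ⟨Complex.ofReal_im r, ?_, ?_⟩
  · rw [Complex.ofReal_re]
    exact mul_nonneg (by positivity) (Finset.sum_nonneg fun z _ => Complex.normSq_nonneg _)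
  rw [Complex.ofReal_re]
  -- Express r via Fourier coefficients
  set a : ZMod N → ℝ := fun k => ‖dftN N g k‖ with hadef
  have hnsq : ∀ k : ZMod N, Complex.normSq (dftN N g k) = a k ^ 2 := by
    intro k
    rw [hadef]
    simp [Complex.normSq_eq_norm_sq]
  have hr4 : r = ∑ k : ZMod N, a k ^ 4 := by
    have hp := parsevalR (N := N) h
    have hconv : ∀ k : ZMod N, Complex.normSq (dftN N h k) = (N : ℝ) ^ 2 * (a k ^ 2) ^ 2 := by
      intro k
      rw [hhdef]
      rw [dftN_conv g k]
      rw [Complex.normSq_mul, map_pow Complex.normSq, hnsq]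
      congr 1
      rw [Complex.normSq_natCast]
      ring
    rw [Finset.sum_congr rfl fun k _ => hconv k] at hp
    rw [← Finset.mul_sum] at hp
    have : ∑ z : ZMod N, Complex.normSq (h z)
        = (N : ℝ) ^ 3 * ∑ k : ZMod N, (a k ^ 2) ^ 2 := by
      have hN0 : (N : ℝ) ≠ 0 := ne_of_gt hNR
      field_simp at hp ⊢
      linarith [hp]
    rw [hrdef, this]
    have hN0 : (N : ℝ) ≠ 0 := ne_of_gt hNR
    field_simp
  have ha2 : ∑ k : ZMod N, a k ^ 2 = 1 := by
    have hp := parsevalR (N := N) g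
    have hg1 : ∀ j : ZMod N, Complex.normSq (g j) = 1 := by
      intro j
      rw [hgdef]
      simp only [Complex.normSq_eq_norm_sq]
      rw [mul_comm, Complex.norm_exp_ofReal_mul_I]
      norm_num
    rw [Finset.sum_congr rfl fun j _ => hg1 j] at hp
    simp only [Finset.sum_const, Finset.card_univ, ZMod.card, nsmul_eq_mul, mul_one] at hp
    rw [← Finset.sum_congr rfl fun k _ => hnsq k, hp]
    field_simp
  have hS : normAN N g = ∑ k : ZMod N, a k := rfl
  have hanneg : ∀ k : ZMod N, 0 ≤ a k := fun k => norm_nonneg _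
  -- Cauchy–Schwarz twice
  set S : ℝ := ∑ k : ZMod N, a k with hSdef
  set P : ℝ := ∑ k : ZMod N, a k ^ 3 with hPdef
  set T : ℝ := ∑ k : ZMod N, a k ^ 4 with hTdef
  have hCS1 : 1 ≤ P * S := by
    have := Finset.sum_mul_sq_le_sq_mul_sq Finset.univ
      (fun k => a k * Real.sqrt (a k)) (fun k => Real.sqrt (a k))
    have e1 : ∀ k : ZMod N, a k * Real.sqrt (a k) * Real.sqrt (a k) = a k ^ 2 := by
      intro k
      rw [mul_assoc, Real.mul_self_sqrt (hanneg k)]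
      ring
    have e2 : ∀ k : ZMod N, (a k * Real.sqrt (a k)) ^ 2 = a k ^ 3 := by
      intro k
      rw [mul_pow, Real.sq_sqrt (hanneg k)]
      ring
    have e3 : ∀ k : ZMod N, (Real.sqrt (a k)) ^ 2 = a k := fun k => Real.sq_sqrt (hanneg k)
    rw [Finset.sum_congr rfl fun k _ => e1 k, Finset.sum_congr rfl fun k _ => e2 k,
      Finset.sum_congr rfl fun k _ => e3 k, ha2] at this
    simpa using this
  have hCS2 : P ^ 2 ≤ T := by
    have := Finset.sum_mul_sq_le_sq_mul_sq Finset.univ (fun k => a k ^ 2) a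
    have e1 : ∀ k : ZMod N, a k ^ 2 * a k = a k ^ 3 := fun k => by ring
    have e2 : ∀ k : ZMod N, (a k ^ 2) ^ 2 = a k ^ 4 := fun k => by ring
    rw [Finset.sum_congr rfl fun k _ => e1 k, Finset.sum_congr rfl fun k _ => e2 k, ha2,
      mul_one] at this
    exact this
  have hSnneg : 0 ≤ S := Finset.sum_nonneg fun k _ => hanneg k
  have hPnneg : 0 ≤ P := Finset.sum_nonneg fun k _ => pow_nonneg (hanneg k) 3
  have hSpos : 0 < S := by
    rcases lt_or_eq_of_le hSnneg with h' | h'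
    · exact h'
    · exfalso
      rw [← h'] at hCS1
      simp at hCS1
      linarith
  have h1 : 1 ≤ T * S ^ 2 := by
    calc (1 : ℝ) = 1 * 1 := by ring
    _ ≤ (P * S) * (P * S) := mul_le_mul hCS1 hCS1 (by norm_num) (by positivity)
    _ = P ^ 2 * S ^ 2 := by ring
    _ ≤ T * S ^ 2 := by
        apply mul_le_mul_of_nonneg_right hCS2 (by positivity)
  rw [hS, hr4]
  rw [div_le_iff₀ (by positivity : (0 : ℝ) < S ^ 2)]
  exact h1
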